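/- Let T ≥ 0 and V be random variables, C a random variable independent of the pair (T, V), and set Y = min(T, C), Δ = 1{T ≤ C}, and S(t) = P(C ≥ t). Assume S(T) > 0 almost surely. Then for any measurable bounded function g : ℝ × ℝ → ℝ, E[ (Δ / S(Y)) · g(Y, V) ] = E[ g(T, V) ]. -/

import Mathlib

open MeasureTheory ProbabilityTheory

theorem stmt1 {Ω : Type*} [MeasurableSpace Ω] (P : Measure Ω) [IsProbabilityMeasure P]
    (T V C : Ω → ℝ) (hT : Measurable T) (hV : Measurable V) (hC : Measurable C)
    (hTnn : ∀ ω, 0 ≤ T ω)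
    (hindep : IndepFun C (fun ω => (T ω, V ω)) P)
    (S : ℝ → ℝ) (hS : ∀ t, S t = (P {ω | t ≤ C ω}).toReal)
    (hSpos : ∀ᵐ ω ∂P, 0 < S (T ω))
    (g : ℝ × ℝ → ℝ) (hg : Measurable g) (M : ℝ) (hbd : ∀ x, |g x| ≤ M) :
    (∫ ω, ((if T ω ≤ C ω then (1 : ℝ) else 0) / S (min (T ω) (C ω)))
        * g (min (T ω) (C ω), V ω) ∂P)
      = ∫ ω, g (T ω, V ω) ∂P := by
  have hM : 0 ≤ M := le_trans (abs_nonneg _) (hbd (0, 0))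
  have hSnn : ∀ t, 0 ≤ S t := fun t => (hS t) ▸ ENNReal.toReal_nonneg
  have hSanti : Antitone S := by
    intro a b hab
    rw [hS a, hS b]
    exact ENNReal.toReal_mono (measure_ne_top P _)
      (measure_mono (fun ω h => le_trans hab h))
  have hSmeas : Measurable S := hSanti.measurable
  set W : Ω → ℝ × ℝ := fun ω => (T ω, V ω) with hWdef
  have hW : Measurable W := hT.prodMk hV
  set H : ℝ × (ℝ × ℝ) → ℝ := fun p => if p.2.1 ≤ p.1 then g p.2 / S p.2.1 else 0 with hHdef
  have hHmeas : Measurable H := by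
    apply Measurable.ite (measurableSet_le measurable_snd.fst measurable_fst)
    · exact (hg.comp measurable_snd).div (hSmeas.comp measurable_snd.fst)
    · exact measurable_const
  set μC : Measure ℝ := P.map C with hμC
  set μW : Measure (ℝ × ℝ) := P.map W with hμW
  haveI : IsProbabilityMeasure μC := Measure.isProbabilityMeasure_map hC.aemeasurable
  haveI : IsProbabilityMeasure μW := Measure.isProbabilityMeasure_map hW.aemeasurable
  have hmap : P.map (fun ω => (C ω, W ω)) = μC.prod μW :=
    (indepFun_iff_map_prod_eq_prod_map_map hC.aemeasurable hW.aemeasurable).mp hindep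
  -- pointwise identification of the integrand
  have key : ∀ ω, ((if T ω ≤ C ω then (1 : ℝ) else 0) / S (min (T ω) (C ω)))
      * g (min (T ω) (C ω), V ω) = H (C ω, W ω) := by
    intro ω
    by_cases h : T ω ≤ C ω
    · simp only [hHdef, hWdef, h, if_true, min_eq_left h]
      ring
    · simp [hHdef, hWdef, h]
  -- the slice function as an indicator
  have hslice : ∀ w : ℝ × ℝ, (fun c => H (c, w))
      = (Set.Ici w.1).indicator (fun _ => g w / S w.1) := by
    intro w
    funext c
    by_cases h : w.1 ≤ c <;> simp [hHdef, h, Set.indicator, Set.mem_Ici]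
  have hμCIci : ∀ t : ℝ, (μC (Set.Ici t)).toReal = S t := by
    intro t
    rw [hμC, Measure.map_apply hC measurableSet_Ici, hS]
    rfl
  have inner : ∀ w : ℝ × ℝ, ∫ c, H (c, w) ∂μC = S w.1 * (g w / S w.1) := by
    intro w
    rw [hslice w, integral_indicator_const _ measurableSet_Ici, smul_eq_mul, Measure.real, hμCIci]
  have innerNorm : ∀ w : ℝ × ℝ, ∫ c, ‖H (c, w)‖ ∂μC = S w.1 * |g w / S w.1| := by
    intro w
    have : (fun c => ‖H (c, w)‖) = (Set.Ici w.1).indicator (fun _ => |g w / S w.1|) := by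
      funext c
      by_cases h : w.1 ≤ c <;> simp [hHdef, h, Set.indicator, Set.mem_Ici, abs_div]
    rw [this, integral_indicator_const _ measurableSet_Ici, smul_eq_mul, Measure.real, hμCIci]
  have hNbound : ∀ w : ℝ × ℝ, S w.1 * |g w / S w.1| ≤ M := by
    intro w
    by_cases h : S w.1 = 0
    · simp [h, hM]
    · rw [abs_div, abs_of_nonneg (hSnn _), ← mul_div_assoc,
        mul_div_cancel_left₀ _ h]
      exact hbd w
  have hint : Integrable H (μC.prod μW) := by
    rw [integrable_prod_iff' hHmeas.aestronglyMeasurable]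
    constructor
    · refine Filter.Eventually.of_forall (fun w => ?_)
      rw [hslice w]
      exact (integrable_const (g w / S w.1)).indicator measurableSet_Ici
    · apply Integrable.mono' (integrable_const M)
      · apply Measurable.aestronglyMeasurable
        have : (fun w : ℝ × ℝ => ∫ c, ‖H (c, w)‖ ∂μC)
            = fun w => S w.1 * |g w / S w.1| := funext innerNorm
        rw [this]
        exact (hSmeas.comp measurable_fst).mul ((hg.div (hSmeas.comp measurable_fst)).abs)
      · refine Filter.Eventually.of_forall (fun w => ?_)
        rw [innerNorm w, Real.norm_eq_abs,
          abs_of_nonneg (mul_nonneg (hSnn _) (abs_nonneg _))]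
        exact hNbound w
  calc ∫ ω, ((if T ω ≤ C ω then (1 : ℝ) else 0) / S (min (T ω) (C ω)))
        * g (min (T ω) (C ω), V ω) ∂P
      = ∫ ω, H (C ω, W ω) ∂P := by
        exact integral_congr_ae (Filter.Eventually.of_forall key)
    _ = ∫ p, H p ∂(P.map (fun ω => (C ω, W ω))) :=
        (integral_map ((hC.prodMk hW).aemeasurable) hHmeas.aestronglyMeasurable).symm
    _ = ∫ p, H p ∂(μC.prod μW) := by rw [hmap]
    _ = ∫ w, ∫ c, H (c, w) ∂μC ∂μW := integral_prod_symm H hint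
    _ = ∫ w, S w.1 * (g w / S w.1) ∂μW := by
        exact integral_congr_ae (Filter.Eventually.of_forall inner)
    _ = ∫ ω, S (T ω) * (g (W ω) / S (T ω)) ∂P := by
        rw [hμW, integral_map hW.aemeasurable]
        exact ((hSmeas.comp measurable_fst).mul
          (hg.div (hSmeas.comp measurable_fst))).aestronglyMeasurable
    _ = ∫ ω, g (T ω, V ω) ∂P := by
        refine integral_congr_ae ?_
        filter_upwards [hSpos] with ω h
        rw [← mul_div_assoc, mul_div_cancel_left₀ _ h.ne']
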